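/- Let $s=\{s_n\}_{n=1}^\infty\subset(0,1]$ be any sequence. For every simple function $h=\sum_{k=1}^m b_k\chi_{B_k}$ with $b_k>0$ and nested measurable sets $B_1\subset B_2\subset\cdots\subset B_m\subset[0,1]$, one has $\|h\|_{\varphi,\psi}\le \sum_{k=1}^m b_k\,\varphi_s(\lambda(B_k))$. -/

import Mathlib

open MeasureTheory ENNReal Set Filter Topology

noncomputable section

/-- Lebesgue measure restricted to the interval `[0,1]`. -/
def μ01 : Measure ℝ := volume.restrict (Set.Icc 0 1)

/-- `φ : [0,1] → [0,∞)` is concave, non-decreasing, and vanishes only at the origin. -/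
structure IsPhi (φ : ℝ → ℝ) : Prop where
  concave : ConcaveOn ℝ (Set.Icc 0 1) φ
  mono : MonotoneOn φ (Set.Icc 0 1)
  zero : φ 0 = 0
  pos : ∀ t : ℝ, 0 < t → t ≤ 1 → 0 < φ t

/-- `ψ : [0,∞) → [0,∞)` is concave, non-decreasing, and vanishes only at the origin. -/
structure IsPsi (ψ : ℝ → ℝ) : Prop where
  concave : ConcaveOn ℝ (Set.Ici 0) ψ
  mono : MonotoneOn ψ (Set.Ici 0)
  zero : ψ 0 = 0
  pos : ∀ t : ℝ, 0 < t → 0 < ψ t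

/-- A sequence `g` of nonnegative `L^∞` functions with `|f| ≤ ∑ₙ gₙ` a.e. -/
def Admissible (f : ℝ → ℝ) (g : ℕ → ℝ → ℝ) : Prop :=
  (∀ n, AEMeasurable (g n) μ01) ∧
  (∀ n, eLpNorm (g n) ⊤ μ01 < ⊤) ∧
  (∀ n x, 0 ≤ g n x) ∧
  (∀ᵐ x ∂μ01, ENNReal.ofReal |f x| ≤ ∑' n : ℕ, ENNReal.ofReal (g n x))

/-- The cost `∑ₙ ψ(n) ‖gₙ‖_∞ φ(‖gₙ‖₁/‖gₙ‖_∞)` of a decomposition (index shifted by 1;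
`0/0 = 0` by the `ℝ≥0∞` division convention, and `φ 0 = 0`). -/
def seqCost (φ ψ : ℝ → ℝ) (g : ℕ → ℝ → ℝ) : ℝ≥0∞ :=
  ∑' n : ℕ, ENNReal.ofReal
    (ψ ((n : ℝ) + 1) * (eLpNorm (g n) ⊤ μ01).toReal *
      φ ((eLpNorm (g n) 1 μ01 / eLpNorm (g n) ⊤ μ01).toReal))

/-- The quasi-norm `‖f‖_{φ,ψ}` (equal to `∞` when no admissible decomposition exists). -/
def QANorm (φ ψ : ℝ → ℝ) (f : ℝ → ℝ) : ℝ≥0∞ :=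
  ⨅ (g : ℕ → ℝ → ℝ) (_ : Admissible f g), seqCost φ ψ g

/-- Membership in the space `QA_{φ,ψ}`. -/
def MemQA (φ ψ : ℝ → ℝ) (f : ℝ → ℝ) : Prop :=
  AEMeasurable f μ01 ∧ QANorm φ ψ f < ⊤

/-- The decreasing rearrangement `f*` of `f` on `[0,1]`. -/
def decRearr (f : ℝ → ℝ) (t : ℝ) : ℝ :=
  sInf {s : ℝ | 0 ≤ s ∧ μ01 {x | s < |f x|} ≤ ENNReal.ofReal t}

/-- The limit `ζ(0⁺)` of a non-decreasing function `ζ` on `[0,1]`. -/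
def limZero (ζ : ℝ → ℝ) : ℝ := sInf (ζ '' Set.Ioc 0 1)

/-- The Lorentz norm `‖f‖_{Λ_ζ} = ∫₀¹ f* dζ = ‖f‖_∞ ζ(0⁺) + ∫₀¹ f*(s) ζ'(s) ds`
(for `ζ` concave the derivative exists a.e. and `ζ` is absolutely continuous on `(0,1]`). -/
def lorentzNorm (ζ : ℝ → ℝ) (f : ℝ → ℝ) : ℝ≥0∞ :=
  eLpNorm f ⊤ μ01 * ENNReal.ofReal (limZero ζ) +
    ∫⁻ s in Set.Ioc (0:ℝ) 1, ENNReal.ofReal (decRearr f s * deriv ζ s)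

/-- Membership in the Lorentz space `Λ_ζ`. -/
def MemLorentz (ζ : ℝ → ℝ) (f : ℝ → ℝ) : Prop :=
  AEMeasurable f μ01 ∧ lorentzNorm ζ f < ⊤

/-- The quasi-concave function `φ_s(t) = inf_n max{sₙ,t} (φ(sₙ)/sₙ) ψ(n)` (index shifted by 1). -/
def phiSeq (φ ψ : ℝ → ℝ) (s : ℕ → ℝ) (t : ℝ) : ℝ :=
  if t = 0 then 0 else ⨅ n : ℕ, max (s n) t * (φ (s n) / s n) * ψ ((n : ℝ) + 1)

/-- The function `τ(t) = φ(t) ψ(logbar(φ(t)/t))` with `logbar t = 1 + log⁺ t`. -/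
def tauF (φ ψ : ℝ → ℝ) (t : ℝ) : ℝ :=
  if t = 0 then 0 else φ t * ψ (1 + max (Real.log (φ t / t)) 0)

instance : IsProbabilityMeasure μ01 := by
  constructor
  simp [μ01, Measure.restrict_apply_univ, Real.volume_Icc]

lemma aux_phi_nonneg {φ : ℝ → ℝ} (hφ : IsPhi φ) {t : ℝ} (h0 : 0 ≤ t) (h1 : t ≤ 1) : 0 ≤ φ t := by
  have := hφ.mono (Set.mem_Icc.2 ⟨le_refl 0, zero_le_one⟩) (Set.mem_Icc.2 ⟨h0, h1⟩) h0
  rw [hφ.zero] at this; exact this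

lemma aux_psi_nonneg {ψ : ℝ → ℝ} (hψ : IsPsi ψ) {t : ℝ} (h0 : 0 ≤ t) : 0 ≤ ψ t := by
  have := hψ.mono (Set.mem_Ici.2 (le_refl 0)) (Set.mem_Ici.2 h0) h0
  rw [hψ.zero] at this; exact this

lemma aux_phi_slope {φ : ℝ → ℝ} (hφ : IsPhi φ) {a t : ℝ} (ha : 0 < a) (hat : a ≤ t)
    (ht1 : t ≤ 1) : φ t ≤ t / a * φ a := by
  have ht : 0 < t := lt_of_lt_of_le ha hat
  have w1 : (0:ℝ) ≤ a / t := by positivity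
  have w2 : (0:ℝ) ≤ 1 - a / t := by
    have : a / t ≤ 1 := (div_le_one ht).2 hat
    linarith
  have w3 : a / t + (1 - a / t) = 1 := by ring
  have h := hφ.concave.2 (Set.mem_Icc.2 ⟨ht.le, ht1⟩)
    (Set.mem_Icc.2 ⟨le_refl 0, zero_le_one⟩) w1 w2 w3
  rw [smul_eq_mul, smul_eq_mul, smul_eq_mul, smul_eq_mul, hφ.zero] at h
  have hid : a / t * t + (1 - a / t) * 0 = a := by field_simp; ring
  rw [hid] at h
  have h2 : a / t * φ t ≤ φ a := by linarith
  have h3 : a * φ t ≤ t * φ a := by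
    have := mul_le_mul_of_nonneg_left h2 ht.le
    calc a * φ t = t * (a / t * φ t) := by field_simp
      _ ≤ t * φ a := mul_le_mul_of_nonneg_left h2 ht.le
  rw [div_mul_eq_mul_div, le_div_iff₀ ha]
  linarith [h3]

lemma aux_meas_g {m : ℕ} (b : Fin m → ℝ) (B : Fin m → Set ℝ)
    (hBmeas : ∀ k, MeasurableSet (B k)) (K : Finset (Fin m)) :
    Measurable (fun x => ∑ k ∈ K, b k * (B k).indicator (fun _ => (1:ℝ)) x) := by
  apply Finset.measurable_sum
  intro k _
  exact (measurable_const.indicator (hBmeas k)).const_mul (b k)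

lemma aux_g_nonneg {m : ℕ} {b : Fin m → ℝ} (hb : ∀ k, 0 ≤ b k) (B : Fin m → Set ℝ)
    (K : Finset (Fin m)) (x : ℝ) :
    0 ≤ ∑ k ∈ K, b k * (B k).indicator (fun _ => (1:ℝ)) x := by
  apply Finset.sum_nonneg
  intro k _
  exact mul_nonneg (hb k) (Set.indicator_nonneg (fun _ _ => zero_le_one) x)

lemma aux_g_le {m : ℕ} {b : Fin m → ℝ} (hb : ∀ k, 0 ≤ b k) (B : Fin m → Set ℝ)
    (K : Finset (Fin m)) (x : ℝ) :
    ∑ k ∈ K, b k * (B k).indicator (fun _ => (1:ℝ)) x ≤ ∑ k ∈ K, b k := by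
  apply Finset.sum_le_sum
  intro k _
  by_cases h : x ∈ B k <;> simp [h, hb k]

lemma aux_measure_ne_top {m : ℕ} (B : Fin m → Set ℝ) (k : Fin m) : μ01 (B k) ≠ ⊤ := by
  have : μ01 (B k) ≤ μ01 Set.univ := measure_mono (Set.subset_univ _)
  rw [measure_univ] at this
  exact (this.trans_lt one_lt_top).ne

lemma aux_L1_le {m : ℕ} {b : Fin m → ℝ} (hb : ∀ k, 0 ≤ b k) (B : Fin m → Set ℝ)
    (hBmeas : ∀ k, MeasurableSet (B k)) (K : Finset (Fin m)) :
    eLpNorm (fun x => ∑ k ∈ K, b k * (B k).indicator (fun _ => (1:ℝ)) x) 1 μ01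
      ≤ ENNReal.ofReal (∑ k ∈ K, b k * (μ01 (B k)).toReal) := by
  rw [eLpNorm_one_eq_lintegral_enorm]
  have hpt : ∀ x, (‖∑ k ∈ K, b k * (B k).indicator (fun _ => (1:ℝ)) x‖₊ : ℝ≥0∞)
      = ∑ k ∈ K, (B k).indicator (fun _ => ENNReal.ofReal (b k)) x := by
    intro x
    rw [← enorm_eq_nnnorm, Real.enorm_eq_ofReal (aux_g_nonneg hb B K x), ENNReal.ofReal_sum_of_nonneg (fun k _ =>
      mul_nonneg (hb k) (Set.indicator_nonneg (fun _ _ => zero_le_one) x))]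
    apply Finset.sum_congr rfl
    intro k _
    by_cases h : x ∈ B k <;> simp [h]
  calc ∫⁻ x, (‖∑ k ∈ K, b k * (B k).indicator (fun _ => (1:ℝ)) x‖₊ : ℝ≥0∞) ∂μ01
      = ∫⁻ x, ∑ k ∈ K, (B k).indicator (fun _ => ENNReal.ofReal (b k)) x ∂μ01 := by
        exact lintegral_congr hpt
    _ = ∑ k ∈ K, ∫⁻ x, (B k).indicator (fun _ => ENNReal.ofReal (b k)) x ∂μ01 := by
        apply lintegral_finset_sum
        intro k _
        exact measurable_const.indicator (hBmeas k)
    _ = ∑ k ∈ K, ENNReal.ofReal (b k) * μ01 (B k) := by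
        apply Finset.sum_congr rfl
        intro k _
        rw [lintegral_indicator_const (hBmeas k)]
    _ ≤ ENNReal.ofReal (∑ k ∈ K, b k * (μ01 (B k)).toReal) := by
        rw [ENNReal.ofReal_sum_of_nonneg (fun k _ =>
          mul_nonneg (hb k) ENNReal.toReal_nonneg)]
        apply Finset.sum_le_sum
        intro k _
        rw [ENNReal.ofReal_mul (hb k), ENNReal.ofReal_toReal (aux_measure_ne_top B k)]

lemma aux_key {φ : ℝ → ℝ} (hφ : IsPhi φ) {sn : ℝ} (hsn0 : 0 < sn) (hsn1 : sn ≤ 1)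
    {m : ℕ} {b : Fin m → ℝ} (hb : ∀ k, 0 ≤ b k) (B : Fin m → Set ℝ)
    (hBmeas : ∀ k, MeasurableSet (B k)) (K : Finset (Fin m)) :
    (eLpNorm (fun x => ∑ k ∈ K, b k * (B k).indicator (fun _ => (1:ℝ)) x) ⊤ μ01).toReal *
      φ ((eLpNorm (fun x => ∑ k ∈ K, b k * (B k).indicator (fun _ => (1:ℝ)) x) 1 μ01 /
          eLpNorm (fun x => ∑ k ∈ K, b k * (B k).indicator (fun _ => (1:ℝ)) x) ⊤ μ01).toReal)
      ≤ ∑ k ∈ K, b k * (max sn ((μ01 (B k)).toReal) * (φ sn / sn)) := by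
  set g : ℝ → ℝ := fun x => ∑ k ∈ K, b k * (B k).indicator (fun _ => (1:ℝ)) x with hg
  set A := eLpNorm g ⊤ μ01 with hA
  set L := eLpNorm g 1 μ01 with hL
  set T : ℝ := ∑ k ∈ K, b k with hT
  set Λ : ℝ := ∑ k ∈ K, b k * (μ01 (B k)).toReal with hΛ
  have hT0 : 0 ≤ T := Finset.sum_nonneg fun k _ => hb k
  have hΛ0 : 0 ≤ Λ := Finset.sum_nonneg fun k _ => mul_nonneg (hb k) ENNReal.toReal_nonneg
  have hAle : A ≤ ENNReal.ofReal T := by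
    rw [hA, eLpNorm_exponent_top]
    apply eLpNormEssSup_le_of_ae_bound (C := T)
    filter_upwards with x
    rw [Real.norm_eq_abs, abs_of_nonneg (aux_g_nonneg hb B K x)]
    exact aux_g_le hb B K x
  have hAtop : A ≠ ⊤ := (hAle.trans_lt ofReal_lt_top).ne
  have hLA : L ≤ A := by
    rw [hL, hA]
    exact eLpNorm_le_eLpNorm_of_exponent_le le_top
      (aux_meas_g b B hBmeas K).aestronglyMeasurable
  have hLtop : L ≠ ⊤ := (hLA.trans_lt hAtop.lt_top).ne
  have hLle : L ≤ ENNReal.ofReal Λ := aux_L1_le hb B hBmeas K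
  have hRHSterm : ∀ k ∈ K, b k * (sn * (φ sn / sn)) ≤ b k * (max sn ((μ01 (B k)).toReal) * (φ sn / sn)) := by
    intro k _
    apply mul_le_mul_of_nonneg_left _ (hb k)
    apply mul_le_mul_of_nonneg_right (le_max_left _ _)
    exact div_nonneg (aux_phi_nonneg hφ hsn0.le hsn1) hsn0.le
  by_cases hA0 : A = 0
  · rw [hA0]
    simp only [ENNReal.toReal_zero, zero_mul]
    exact Finset.sum_nonneg fun k _ => mul_nonneg (hb k)
      (mul_nonneg (le_trans hsn0.le (le_max_left _ _))
        (div_nonneg (aux_phi_nonneg hφ hsn0.le hsn1) hsn0.le))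
  · have hr1 : (L / A).toReal ≤ 1 := by
      have : L / A ≤ 1 := by
        rw [ENNReal.div_le_iff hA0 hAtop]
        simpa using hLA
      exact le_trans (ENNReal.toReal_mono one_ne_top this) (by simp)
    have hr0 : 0 ≤ (L / A).toReal := ENNReal.toReal_nonneg
    have haT : A.toReal ≤ T := by
      have := ENNReal.toReal_mono ofReal_ne_top hAle
      rwa [ENNReal.toReal_ofReal hT0] at this
    have ha0 : 0 ≤ A.toReal := ENNReal.toReal_nonneg
    rcases le_or_gt ((L / A).toReal) sn with hcase | hcase
    · -- small ratio: φ(r) ≤ φ(sn)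
      have hφr : φ ((L / A).toReal) ≤ φ sn :=
        hφ.mono (Set.mem_Icc.2 ⟨hr0, hr1⟩) (Set.mem_Icc.2 ⟨hsn0.le, hsn1⟩) hcase
      calc A.toReal * φ ((L / A).toReal) ≤ T * φ sn := by
            apply mul_le_mul haT hφr (aux_phi_nonneg hφ hr0 hr1) hT0
        _ = ∑ k ∈ K, b k * (sn * (φ sn / sn)) := by
            rw [hT, Finset.sum_mul]
            apply Finset.sum_congr rfl
            intro k _
            field_simp
        _ ≤ _ := Finset.sum_le_sum hRHSterm
    · -- large ratio: φ(r) ≤ (r/sn) φ(sn)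
      have hφr : φ ((L / A).toReal) ≤ (L / A).toReal / sn * φ sn :=
        aux_phi_slope hφ hsn0 hcase.le hr1
      have har : A.toReal * (L / A).toReal = L.toReal := by
        rw [← ENNReal.toReal_mul, ENNReal.mul_div_cancel' (fun h => absurd h hA0) (fun h => absurd h hAtop)]
      have hLΛ : L.toReal ≤ Λ := by
        have := ENNReal.toReal_mono ofReal_ne_top hLle
        rwa [ENNReal.toReal_ofReal hΛ0] at this
      calc A.toReal * φ ((L / A).toReal)
          ≤ A.toReal * ((L / A).toReal / sn * φ sn) :=
            mul_le_mul_of_nonneg_left hφr ha0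
        _ = L.toReal * (φ sn / sn) := by
            rw [← har]; ring
        _ ≤ Λ * (φ sn / sn) := by
            apply mul_le_mul_of_nonneg_right hLΛ
            exact div_nonneg (aux_phi_nonneg hφ hsn0.le hsn1) hsn0.le
        _ = ∑ k ∈ K, b k * ((μ01 (B k)).toReal * (φ sn / sn)) := by
            rw [hΛ, Finset.sum_mul]
            apply Finset.sum_congr rfl
            intro k _
            ring
        _ ≤ _ := by
            apply Finset.sum_le_sum
            intro k _
            apply mul_le_mul_of_nonneg_left _ (hb k)
            apply mul_le_mul_of_nonneg_right (le_max_right _ _)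
            exact div_nonneg (aux_phi_nonneg hφ hsn0.le hsn1) hsn0.le

lemma aux_w_nonneg {φ ψ : ℝ → ℝ} (hφ : IsPhi φ) (hψ : IsPsi ψ)
    {s : ℕ → ℝ} (hs : ∀ n, s n ∈ Set.Ioc (0:ℝ) 1) (t : ℝ) (n : ℕ) :
    0 ≤ max (s n) t * (φ (s n) / s n) * ψ ((n : ℝ) + 1) := by
  have h1 := (hs n).1
  have h2 := (hs n).2
  apply mul_nonneg (mul_nonneg (le_trans h1.le (le_max_left _ _))
    (div_nonneg (aux_phi_nonneg hφ h1.le h2) h1.le))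
  exact aux_psi_nonneg hψ (by positivity)

lemma aux_phiSeq_nonneg {φ ψ : ℝ → ℝ} (hφ : IsPhi φ) (hψ : IsPsi ψ)
    {s : ℕ → ℝ} (hs : ∀ n, s n ∈ Set.Ioc (0:ℝ) 1) (t : ℝ) :
    0 ≤ phiSeq φ ψ s t := by
  unfold phiSeq
  split
  · exact le_refl 0
  · exact Real.iInf_nonneg (aux_w_nonneg hφ hψ hs t)

/-- for any sequence `s ⊂ (0,1]` and any simple function
`h = ∑ₖ bₖ χ_{Bₖ}` with `bₖ > 0` and nested measurable sets `B₁ ⊆ ⋯ ⊆ Bₘ ⊆ [0,1]`,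
one has `‖h‖_{φ,ψ} ≤ ∑ₖ bₖ φ_s(λ(Bₖ))`. -/
theorem stmt12 {φ ψ : ℝ → ℝ} (hφ : IsPhi φ) (hψ : IsPsi ψ)
    (s : ℕ → ℝ) (hs : ∀ n, s n ∈ Set.Ioc (0:ℝ) 1)
    (m : ℕ) (b : Fin m → ℝ) (B : Fin m → Set ℝ)
    (hb : ∀ k, 0 < b k) (hBmeas : ∀ k, MeasurableSet (B k))
    (hBsub : ∀ k, B k ⊆ Set.Icc (0:ℝ) 1)
    (hBnested : ∀ k l : Fin m, k ≤ l → B k ⊆ B l) :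
    QANorm φ ψ (fun x => ∑ k : Fin m, b k * (B k).indicator (fun _ => (1:ℝ)) x)
      ≤ ENNReal.ofReal (∑ k : Fin m, b k * phiSeq φ ψ s ((μ01 (B k)).toReal)) := by
  classical
  have hb' : ∀ k, 0 ≤ b k := fun k => (hb k).le
  set lam : Fin m → ℝ := fun k => (μ01 (B k)).toReal with hlam
  set RHS : ℝ := ∑ k : Fin m, b k * phiSeq φ ψ s (lam k) with hRHSdef
  apply ENNReal.le_of_forall_pos_le_add
  intro ε hε _
  set K : Finset (Fin m) := Finset.univ.filter (fun k => μ01 (B k) ≠ 0) with hKdef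
  set T : ℝ := ∑ k ∈ K, b k with hTdef
  have hT0 : 0 ≤ T := Finset.sum_nonneg fun k _ => hb' k
  set cst : ℝ := (ε : ℝ) / (T + 1) with hcst
  have hε0 : (0:ℝ) < ε := hε
  have hcst0 : 0 < cst := div_pos hε0 (by linarith)
  -- choose near-optimal indices
  have hchoice : ∀ k : Fin m, ∃ n : ℕ, k ∈ K →
      max (s n) (lam k) * (φ (s n) / s n) * ψ ((n : ℝ) + 1) < phiSeq φ ψ s (lam k) + cst := by
    intro k
    by_cases hk : k ∈ K
    · have hkne : μ01 (B k) ≠ 0 := by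
        rw [hKdef] at hk
        simpa using (Finset.mem_filter.1 hk).2
      have hlamne : lam k ≠ 0 := by
        rw [hlam]
        simp only []
        exact fun h => hkne (by
          have := ENNReal.toReal_eq_zero_iff (μ01 (B k)) |>.1 h
          rcases this with h' | h'
          · exact h'
          · exact absurd h' (aux_measure_ne_top B k))
      have heq : phiSeq φ ψ s (lam k)
          = ⨅ n : ℕ, max (s n) (lam k) * (φ (s n) / s n) * ψ ((n : ℝ) + 1) := by
        rw [phiSeq, if_neg hlamne]
      have hlt : (⨅ n : ℕ, max (s n) (lam k) * (φ (s n) / s n) * ψ ((n : ℝ) + 1))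
          < phiSeq φ ψ s (lam k) + cst := by
        rw [heq] at *
        exact lt_add_of_pos_right _ hcst0
      obtain ⟨n, hn⟩ := exists_lt_of_ciInf_lt hlt
      exact ⟨n, fun _ => hn⟩
    · exact ⟨0, fun h => absurd h hk⟩
  choose idx hidx using hchoice
  set N : ℕ := (Finset.univ.sup idx) + 1 with hNdef
  have hidxlt : ∀ k : Fin m, idx k < N := fun k =>
    Nat.lt_succ_of_le (Finset.le_sup (Finset.mem_univ k))
  -- the decomposition
  set g : ℕ → ℝ → ℝ := fun n x =>
    ∑ k ∈ K.filter (fun k => idx k = n), b k * (B k).indicator (fun _ => (1:ℝ)) x with hgdef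
  have hgmeas : ∀ n, Measurable (g n) := fun n => aux_meas_g b B hBmeas _
  have hgnn : ∀ n x, 0 ≤ g n x := fun n x => aux_g_nonneg hb' B _ x
  have hAdm : Admissible (fun x => ∑ k : Fin m, b k * (B k).indicator (fun _ => (1:ℝ)) x) g := by
    refine ⟨fun n => (hgmeas n).aemeasurable, fun n => ?_, hgnn, ?_⟩
    · rw [eLpNorm_exponent_top]
      apply eLpNormEssSup_lt_top_of_ae_bound (C := ∑ k ∈ K.filter (fun k => idx k = n), b k)
      filter_upwards with x
      rw [Real.norm_eq_abs, abs_of_nonneg (hgnn n x)]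
      exact aux_g_le hb' B _ x
    · have hae : ∀ᵐ x ∂μ01, ∀ k : Fin m, μ01 (B k) = 0 → x ∉ B k := by
        rw [ae_all_iff]
        intro k
        by_cases hk : μ01 (B k) = 0
        · filter_upwards [measure_eq_zero_iff_ae_notMem.1 hk] with x hx
          exact fun _ => hx
        · filter_upwards with x hx
          exact absurd hx hk
      filter_upwards [hae] with x hx
      have hxval : ∑ k : Fin m, b k * (B k).indicator (fun _ => (1:ℝ)) x
          = ∑ k ∈ K, b k * (B k).indicator (fun _ => (1:ℝ)) x := by
        symm
        apply Finset.sum_subset (Finset.subset_univ K)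
        intro k _ hk
        have hk0 : μ01 (B k) = 0 := by
          rw [hKdef] at hk
          simpa using (by simpa using hk : ¬ (k ∈ Finset.univ ∧ μ01 (B k) ≠ 0))
        rw [Set.indicator_of_notMem (hx k hk0)]
        ring
      have hfib : ∑ k ∈ K, b k * (B k).indicator (fun _ => (1:ℝ)) x
          = ∑ n ∈ Finset.range N, g n x := by
        rw [hgdef]
        exact (Finset.sum_fiberwise_of_maps_to
          (fun k _ => Finset.mem_range.2 (hidxlt k)) _).symm
      have hnn : 0 ≤ ∑ k : Fin m, b k * (B k).indicator (fun _ => (1:ℝ)) x :=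
        aux_g_nonneg hb' B _ x
      rw [abs_of_nonneg hnn, hxval, hfib,
        ENNReal.ofReal_sum_of_nonneg (fun n _ => hgnn n x)]
      exact Summable.sum_le_tsum _ (fun n _ => zero_le) ENNReal.summable
  refine le_trans (iInf₂_le g hAdm) ?_
  -- bound the cost
  have hfib_empty : ∀ n, N ≤ n → K.filter (fun k => idx k = n) = ∅ := by
    intro n hn
    apply Finset.filter_false_of_mem
    intro k _
    exact fun h => absurd (h ▸ hidxlt k) (not_lt.2 hn)
  have hzero : ∀ n ∉ Finset.range N, ENNReal.ofReal
      (ψ ((n : ℝ) + 1) * (eLpNorm (g n) ⊤ μ01).toReal *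
        φ ((eLpNorm (g n) 1 μ01 / eLpNorm (g n) ⊤ μ01).toReal)) = 0 := by
    intro n hn
    have hgn : g n = fun _ => (0:ℝ) := by
      funext x
      rw [hgdef]
      simp only []
      rw [hfib_empty n (not_lt.1 (fun h => hn (Finset.mem_range.2 h)))]
      simp
    rw [hgn]
    simp [eLpNorm_zero', ENNReal.zero_div, hφ.zero]
  rw [seqCost, tsum_eq_sum hzero]
  -- termwise bound
  have hterm : ∀ n ∈ Finset.range N, ENNReal.ofReal
      (ψ ((n : ℝ) + 1) * (eLpNorm (g n) ⊤ μ01).toReal *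
        φ ((eLpNorm (g n) 1 μ01 / eLpNorm (g n) ⊤ μ01).toReal))
      ≤ ENNReal.ofReal (∑ k ∈ K.filter (fun k => idx k = n),
          b k * (max (s n) (lam k) * (φ (s n) / s n) * ψ ((n : ℝ) + 1))) := by
    intro n _
    apply ENNReal.ofReal_le_ofReal
    have hψn : 0 ≤ ψ ((n : ℝ) + 1) := aux_psi_nonneg hψ (by positivity)
    have hkey := aux_key hφ (hs n).1 (hs n).2 hb' B hBmeas (K.filter (fun k => idx k = n))
    calc ψ ((n : ℝ) + 1) * (eLpNorm (g n) ⊤ μ01).toReal *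
          φ ((eLpNorm (g n) 1 μ01 / eLpNorm (g n) ⊤ μ01).toReal)
        = ((eLpNorm (g n) ⊤ μ01).toReal *
            φ ((eLpNorm (g n) 1 μ01 / eLpNorm (g n) ⊤ μ01).toReal)) * ψ ((n : ℝ) + 1) := by
          ring
      _ ≤ (∑ k ∈ K.filter (fun k => idx k = n),
            b k * (max (s n) (lam k) * (φ (s n) / s n))) * ψ ((n : ℝ) + 1) := by
          apply mul_le_mul_of_nonneg_right _ hψn
          exact hkey
      _ = ∑ k ∈ K.filter (fun k => idx k = n),
            b k * (max (s n) (lam k) * (φ (s n) / s n) * ψ ((n : ℝ) + 1)) := by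
          rw [Finset.sum_mul]
          exact Finset.sum_congr rfl fun k _ => by ring
  refine le_trans (Finset.sum_le_sum hterm) ?_
  rw [← ENNReal.ofReal_sum_of_nonneg (fun n _ => Finset.sum_nonneg fun k _ =>
    mul_nonneg (hb' k) (aux_w_nonneg hφ hψ hs (lam k) n))]
  have hswap : ∑ n ∈ Finset.range N, ∑ k ∈ K.filter (fun k => idx k = n),
      b k * (max (s n) (lam k) * (φ (s n) / s n) * ψ ((n : ℝ) + 1))
      = ∑ k ∈ K, b k * (max (s (idx k)) (lam k) * (φ (s (idx k)) / s (idx k)) *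
          ψ ((idx k : ℝ) + 1)) := by
    rw [← Finset.sum_fiberwise_of_maps_to
      (fun k (hk : k ∈ K) => Finset.mem_range.2 (hidxlt k))
      (fun k => b k * (max (s (idx k)) (lam k) * (φ (s (idx k)) / s (idx k)) *
          ψ ((idx k : ℝ) + 1)))]
    apply Finset.sum_congr rfl
    intro n _
    apply Finset.sum_congr rfl
    intro k hk
    have : idx k = n := (Finset.mem_filter.1 hk).2
    rw [this]
  rw [hswap]
  have hfinal : ∑ k ∈ K, b k * (max (s (idx k)) (lam k) * (φ (s (idx k)) / s (idx k)) *
      ψ ((idx k : ℝ) + 1)) ≤ RHS + (ε : ℝ) := by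
    have h1 : ∀ k ∈ K, b k * (max (s (idx k)) (lam k) * (φ (s (idx k)) / s (idx k)) *
        ψ ((idx k : ℝ) + 1)) ≤ b k * (phiSeq φ ψ s (lam k) + cst) := by
      intro k hk
      apply mul_le_mul_of_nonneg_left _ (hb' k)
      have := hidx k hk
      calc max (s (idx k)) (lam k) * (φ (s (idx k)) / s (idx k)) * ψ ((idx k : ℝ) + 1)
          ≤ phiSeq φ ψ s (lam k) + cst := this.le
        _ = _ := rfl
    calc ∑ k ∈ K, b k * (max (s (idx k)) (lam k) * (φ (s (idx k)) / s (idx k)) *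
          ψ ((idx k : ℝ) + 1))
        ≤ ∑ k ∈ K, b k * (phiSeq φ ψ s (lam k) + cst) := Finset.sum_le_sum h1
      _ = (∑ k ∈ K, b k * phiSeq φ ψ s (lam k)) + cst * T := by
          rw [hTdef, Finset.mul_sum]
          rw [← Finset.sum_add_distrib]
          exact Finset.sum_congr rfl fun k _ => by ring
      _ ≤ RHS + (ε : ℝ) := by
          apply add_le_add
          · rw [hRHSdef]
            apply Finset.sum_le_sum_of_subset_of_nonneg (Finset.subset_univ K)
            intro k _ _
            exact mul_nonneg (hb' k) (aux_phiSeq_nonneg hφ hψ hs (lam k))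
          · rw [hcst]
            rw [div_mul_eq_mul_div, div_le_iff₀ (by linarith : (0:ℝ) < T + 1)]
            nlinarith
  calc ENNReal.ofReal _ ≤ ENNReal.ofReal (RHS + (ε : ℝ)) := ENNReal.ofReal_le_ofReal hfinal
    _ ≤ ENNReal.ofReal RHS + ENNReal.ofReal (ε : ℝ) := ENNReal.ofReal_add_le
    _ = ENNReal.ofReal RHS + ε := by rw [ENNReal.ofReal_coe_nnreal]
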